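/- The X-ray transform on the torus is injective on L¹ functions: if f ∈ L¹(𝕋^n), n ≥ 2, and for every nonzero v ∈ ℤ^n the function x ↦ ∫₀¹ f(x+tv) dt equals 0 almost everywhere, then f = 0 almost everywhere. -/

import Mathlib

open MeasureTheory Real

namespace XrayAux

open Set Function Submodule
open scoped Pointwise

variable {n : ℕ}

/-- Cast an integer vector to a real vector. -/
noncomputable def ic (m : Fin n → ℤ) : Fin n → ℝ := fun i => (m i : ℝ)

/-- The character `e^{2πi⟨k,x⟩}`. -/
noncomputable def char (k : Fin n → ℤ) (x : Fin n → ℝ) : ℂ :=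
  Complex.exp (((2 * π * ∑ i, (k i : ℝ) * x i : ℝ) : ℂ) * Complex.I)

lemma char_norm (k : Fin n → ℤ) (x : Fin n → ℝ) : ‖char k x‖ = 1 := by
  rw [char]
  exact Complex.norm_exp_ofReal_mul_I _

lemma char_continuous (k : Fin n → ℤ) : Continuous (char (n := n) k) := by
  unfold char
  fun_prop

lemma char_add (k : Fin n → ℤ) (x y : Fin n → ℝ) :
    char k (x + y) = char k x * char k y := by
  rw [char, char, char, ← Complex.exp_add]
  congr 1
  have : (∑ i, (k i : ℝ) * (x + y) i) = (∑ i, (k i : ℝ) * x i) + ∑ i, (k i : ℝ) * y i := by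
    rw [← Finset.sum_add_distrib]
    exact Finset.sum_congr rfl fun i _ => by simp [Pi.add_apply, mul_add]
  rw [this]
  push_cast
  ring

lemma char_int (k m : Fin n → ℤ) : char k (ic m) = 1 := by
  have h : ((2 * π * ∑ i, (k i : ℝ) * ic m i : ℝ) : ℂ) * Complex.I
      = ((∑ i, k i * m i : ℤ) : ℂ) * (2 * π * Complex.I) := by
    push_cast [ic]
    ring
  rw [char, h, Complex.exp_int_mul_two_pi_mul_I]

lemma char_smul (k v : Fin n → ℤ) (h : ∑ i, k i * v i = 0) (t : ℝ) :
    char k (t • ic v) = 1 := by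
  have h1 : (∑ i, (k i : ℝ) * (t • ic v) i) = t * ((∑ i, k i * v i : ℤ) : ℝ) := by
    push_cast [ic, Finset.mul_sum]
    exact Finset.sum_congr rfl fun i _ => by simp [Pi.smul_apply, smul_eq_mul, ic]; ring
  rw [char, h1, h]
  simp

section Lattice

noncomputable def bb (n : ℕ) : Module.Basis (Fin n) ℝ (Fin n → ℝ) := Pi.basisFun ℝ (Fin n)

noncomputable def LL (n : ℕ) : AddSubgroup (Fin n → ℝ) :=
  (span ℤ (Set.range ⇑(bb n))).toAddSubgroup

noncomputable def DD (n : ℕ) : Set (Fin n → ℝ) := ZSpan.fundamentalDomain (bb n)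

lemma hDD (n : ℕ) : IsAddFundamentalDomain (LL n) (DD n) volume :=
  ZSpan.isAddFundamentalDomain' (bb n) volume

lemma mem_LL {x : Fin n → ℝ} : x ∈ LL n ↔ ∃ m : Fin n → ℤ, x = ic m := by
  rw [LL, Submodule.mem_toAddSubgroup, Module.Basis.mem_span_iff_repr_mem]
  constructor
  · intro h
    choose m hm using h
    refine ⟨m, funext fun i => ?_⟩
    have := hm i
    simp only [bb, Pi.basisFun_repr, algebraMap_int_eq, eq_intCast] at this
    simp [ic, ← this]
  · rintro ⟨m, rfl⟩ i
    exact ⟨m i, by simp [bb, ic]⟩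

noncomputable def eL : (Fin n → ℤ) ≃ LL n :=
  Equiv.ofBijective (fun m => ⟨ic m, mem_LL.2 ⟨m, rfl⟩⟩)
    ⟨fun a b hab => by
      have : ic a = ic b := congrArg Subtype.val hab
      funext i
      have h2 := congrFun this i
      simp only [ic] at h2
      exact_mod_cast h2,
     fun γ => by
      obtain ⟨m, hm⟩ := mem_LL.1 γ.2
      exact ⟨m, Subtype.ext hm.symm⟩⟩

instance : Countable (LL n) := Countable.of_equiv _ eL

lemma mem_DD {x : Fin n → ℝ} : x ∈ DD n ↔ ∀ i, x i ∈ Ico (0 : ℝ) 1 := by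
  simp [DD, ZSpan.mem_fundamentalDomain, bb]

lemma DD_measurable : MeasurableSet (DD n) :=
  ZSpan.fundamentalDomain_measurableSet (bb n)

lemma DD_subset : DD n ⊆ Icc (0 : Fin n → ℝ) 1 := by
  intro x hx
  rw [Set.mem_Icc]
  constructor <;> intro i
  · exact (mem_DD.1 hx i).1
  · exact (mem_DD.1 hx i).2.le

lemma norm_le_of_mem_DD {x : Fin n → ℝ} (hx : x ∈ DD n) : ‖x‖ ≤ 1 := by
  refine (pi_norm_le_iff_of_nonneg zero_le_one).2 fun i => ?_
  have h := mem_DD.1 hx i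
  rw [Real.norm_eq_abs, abs_le]
  exact ⟨by linarith [h.1], h.2.le⟩

lemma vadd_eq (γ : LL n) (x : Fin n → ℝ) : γ +ᵥ x = (γ : Fin n → ℝ) + x := rfl

end Lattice

section Translate

variable {Eg : Type*} [NormedAddCommGroup Eg] [NormedSpace ℝ Eg]

lemma translate_fd (a : Fin n → ℝ) : IsAddFundamentalDomain (LL n) (a +ᵥ DD n) volume :=
  (hDD n).vadd_of_comm a

lemma setIntegral_translate {F : (Fin n → ℝ) → Eg}
    (hinv : ∀ (γ : LL n) (x : Fin n → ℝ), F (γ +ᵥ x) = F x) (a : Fin n → ℝ) :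
    ∫ x in DD n, F (a + x) = ∫ x in DD n, F x := by
  have h1 : ∫ y in a +ᵥ DD n, F y = ∫ x in DD n, F (a + x) := by
    rw [← Set.image_vadd]
    exact (measurePreserving_vadd a volume).setIntegral_image_emb
      (measurableEmbedding_const_vadd a) F (DD n)
  rw [← h1]
  exact (translate_fd a).setIntegral_eq (hDD n) hinv

lemma integrableOn_translate {F : (Fin n → ℝ) → Eg}
    (hinv : ∀ (γ : LL n) (x : Fin n → ℝ), F (γ +ᵥ x) = F x) (a : Fin n → ℝ) :
    IntegrableOn (fun x => F (a + x)) (DD n) ↔ IntegrableOn F (DD n) := by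
  have h1 : IntegrableOn F (a +ᵥ DD n) ↔ IntegrableOn (fun x => F (a + x)) (DD n) := by
    rw [← Set.image_vadd]
    exact (measurePreserving_vadd a volume).integrableOn_image
      (measurableEmbedding_const_vadd a)
  rw [← h1]
  exact (translate_fd a).integrableOn_iff (hDD n) hinv

end Translate


section FProps

variable {f : (Fin n → ℝ) → ℂ}

lemma f_inv (hper : ∀ (x : Fin n → ℝ) (m : Fin n → ℤ), f (x + fun i => (m i : ℝ)) = f x) :
    ∀ (γ : LL n) (x : Fin n → ℝ), f (γ +ᵥ x) = f x := by
  intro γ x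
  obtain ⟨m, hm⟩ := mem_LL.1 γ.2
  rw [vadd_eq, hm, add_comm]
  exact hper x m

lemma integrableOn_DD (hf : IntegrableOn f (Set.Icc (0 : Fin n → ℝ) 1)) :
    IntegrableOn f (DD n) :=
  hf.mono_set DD_subset

lemma locallyIntegrable
    (hper : ∀ (x : Fin n → ℝ) (m : Fin n → ℤ), f (x + fun i => (m i : ℝ)) = f x)
    (hf : IntegrableOn f (Set.Icc (0 : Fin n → ℝ) 1)) :
    LocallyIntegrable f volume := by
  intro x
  set a : Fin n → ℝ := fun i => x i - 1/2 with ha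
  refine ⟨a +ᵥ DD n, ?_, ?_⟩
  · rw [mem_nhds_iff]
    refine ⟨(fun y => y - a) ⁻¹' (Set.pi Set.univ fun _ => Ioo (0:ℝ) 1), ?_, ?_, ?_⟩
    · intro y hy
      rw [← Set.image_vadd]
      refine ⟨y - a, ?_, by show a +ᵥ (y - a) = y; rw [vadd_eq_add]; abel⟩
      rw [mem_DD]
      intro i
      have := hy i (Set.mem_univ i)
      exact ⟨this.1.le, this.2⟩
    · exact (isOpen_set_pi finite_univ fun i _ => isOpen_Ioo).preimage
        (continuous_id.sub continuous_const)
    · intro i _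
      simp only [Pi.sub_apply, ha]
      norm_num
  · exact ((translate_fd a).integrableOn_iff (hDD n) (f_inv hper)).2 (integrableOn_DD hf)

lemma exists_orth (hn : 2 ≤ n) (k : Fin n → ℤ) :
    ∃ v : Fin n → ℤ, v ≠ 0 ∧ ∑ i, k i * v i = 0 := by
  by_cases hk : k = 0
  · refine ⟨Pi.single ⟨0, by omega⟩ 1, ?_, by simp [hk]⟩
    intro h0
    have := congrFun h0 ⟨0, by omega⟩
    simp at this
  · obtain ⟨i, hi⟩ := Function.ne_iff.1 hk
    have hi' : k i ≠ 0 := by simpa using hi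
    haveI : Nontrivial (Fin n) := Fin.nontrivial_iff_two_le.mpr hn
    obtain ⟨j, hj⟩ := exists_ne i
    refine ⟨Pi.single j (k i) - Pi.single i (k j), ?_, ?_⟩
    · intro h0
      have := congrFun h0 j
      rw [Pi.sub_apply, Pi.single_eq_same, Pi.single_eq_of_ne hj, sub_zero, Pi.zero_apply] at this
      exact hi' this
    · set w : Fin n → ℤ := Pi.single j (k i) - Pi.single i (k j) with hw
      have h1 : ∑ i', k i' * (Pi.single j (k i) : Fin n → ℤ) i' = k j * k i := by
        rw [Finset.sum_eq_single j]
        · rw [Pi.single_eq_same]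
        · intro b _ hb
          rw [Pi.single_eq_of_ne hb, mul_zero]
        · intro hb
          exact absurd (Finset.mem_univ j) hb
      have h2 : ∑ i', k i' * (Pi.single i (k j) : Fin n → ℤ) i' = k i * k j := by
        rw [Finset.sum_eq_single i]
        · rw [Pi.single_eq_same]
        · intro b _ hb
          rw [Pi.single_eq_of_ne hb, mul_zero]
        · intro hb
          exact absurd (Finset.mem_univ i) hb
      calc ∑ i', k i' * w i'
          = (∑ i', k i' * (Pi.single j (k i) : Fin n → ℤ) i') - ∑ i', k i' * (Pi.single i (k j) : Fin n → ℤ) i' := by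
            rw [← Finset.sum_sub_distrib]
            refine Finset.sum_congr rfl fun b _ => ?_
            rw [hw, Pi.sub_apply, mul_sub]
        _ = 0 := by rw [h1, h2]; ring

lemma coeff_zero
    (hn : 2 ≤ n)
    (hper : ∀ (x : Fin n → ℝ) (m : Fin n → ℤ), f (x + fun i => (m i : ℝ)) = f x)
    (hf : IntegrableOn f (Set.Icc (0 : Fin n → ℝ) 1))
    (h : ∀ v : Fin n → ℤ, v ≠ 0 →
      (fun x : Fin n → ℝ => ∫ t in (0:ℝ)..1, f (x + t • fun i => (v i : ℝ)))
        =ᵐ[volume] 0)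
    (k : Fin n → ℤ) :
    ∫ x in DD n, char k x * f x = 0 := by
  obtain ⟨v, hv0, hkv⟩ := exists_orth hn k
  have hloc : LocallyIntegrable f volume := locallyIntegrable hper hf
  have hinv := f_inv (n := n) hper
  have hIv : ∀ a : Fin n → ℝ, Integrable (fun x => f (x + a)) (volume.restrict (DD n)) := by
    intro a
    have h1 := (integrableOn_translate (f_inv hper) a).2 (integrableOn_DD hf)
    have h2 : (fun x => f (x + a)) = fun x => f (a + x) := funext fun x => by rw [add_comm]
    rw [h2]
    exact h1
  set μp := (volume.restrict (DD n)).prod (volume.restrict (Ioc (0:ℝ) 1)) with hμp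
  have hs_cont : Continuous (fun p : (Fin n → ℝ) × ℝ => p.1 + p.2 • ic v) :=
    continuous_fst.add (continuous_snd.smul continuous_const)
  have hqmp : Measure.QuasiMeasurePreserving
      (fun p : (Fin n → ℝ) × ℝ => p.1 + p.2 • ic v) μp volume := by
    refine ⟨hs_cont.measurable, Measure.AbsolutelyContinuous.mk fun A hA h0 => ?_⟩
    rw [Measure.map_apply hs_cont.measurable hA]
    have hpre : MeasurableSet ((fun p : (Fin n → ℝ) × ℝ => p.1 + p.2 • ic v) ⁻¹' A) :=
      hs_cont.measurable hA
    rw [hμp, Measure.prod_apply_symm hpre]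
    have hz : ∀ t : ℝ, (volume.restrict (DD n))
        ((fun x : Fin n → ℝ => (x, t)) ⁻¹' ((fun p : (Fin n → ℝ) × ℝ => p.1 + p.2 • ic v) ⁻¹' A))
          = 0 := by
      intro t
      refine le_antisymm (le_trans (Measure.restrict_apply_le _ _) (le_of_eq ?_)) (by positivity)
      have : ((fun x : Fin n → ℝ => (x, t)) ⁻¹'
          ((fun p : (Fin n → ℝ) × ℝ => p.1 + p.2 • ic v) ⁻¹' A))
          = (fun x : Fin n → ℝ => x + t • ic v) ⁻¹' A := rfl
      rw [this, measure_preimage_add_right]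
      exact h0
    simp only [hz]
    simp
  have hsm : AEStronglyMeasurable
      (fun p : (Fin n → ℝ) × ℝ => char k p.1 * f (p.1 + p.2 • ic v)) μp :=
    (((char_continuous k).comp continuous_fst).aestronglyMeasurable).mul
      (hloc.aestronglyMeasurable.comp_quasiMeasurePreserving hqmp)
  have hnorm_inv : ∀ (γ : LL n) (y : Fin n → ℝ), ‖f (γ +ᵥ y)‖ = ‖f y‖ :=
    fun γ y => congrArg norm (hinv γ y)
  have hnormint : ∀ t : ℝ, (∫ x in DD n, ‖char k x * f (x + t • ic v)‖) = ∫ x in DD n, ‖f x‖ := by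
    intro t
    have e1 : ∀ x : Fin n → ℝ, ‖char k x * f (x + t • ic v)‖ = ‖f (t • ic v + x)‖ := fun x => by
      rw [norm_mul, char_norm, one_mul, add_comm]
    calc (∫ x in DD n, ‖char k x * f (x + t • ic v)‖)
        = ∫ x in DD n, ‖f (t • ic v + x)‖ := by simp_rw [e1]
      _ = ∫ x in DD n, ‖f x‖ := setIntegral_translate (F := fun y => ‖f y‖) hnorm_inv (t • ic v)
  have hIprod : Integrable (fun p : (Fin n → ℝ) × ℝ => char k p.1 * f (p.1 + p.2 • ic v)) μp := by
    rw [hμp]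
    refine (integrable_prod_iff' (by rw [← hμp]; exact hsm)).2 ⟨?_, ?_⟩
    · refine Filter.Eventually.of_forall fun t => ?_
      exact Integrable.bdd_mul (c := 1) (hIv (t • ic v)) ((char_continuous k).aestronglyMeasurable)
        (Filter.Eventually.of_forall fun x => (char_norm k x).le)
    · have e2 : (fun t : ℝ => ∫ x, ‖char k x * f (x + t • ic v)‖ ∂(volume.restrict (DD n)))
          = fun _ => ∫ x in DD n, ‖f x‖ := funext fun t => hnormint t
      rw [e2]
      exact integrableOn_const (by rw [Real.volume_Ioc]; exact ENNReal.ofReal_ne_top)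
  have key : ∫ x in DD n, char k x * (∫ t in (0:ℝ)..1, f (x + t • ic v)) = 0 := by
    have hae := h v hv0
    refine integral_eq_zero_of_ae ?_
    filter_upwards [ae_restrict_of_ae hae] with x hx
    simp only [Pi.zero_apply] at hx ⊢
    exact mul_eq_zero_of_right _ hx
  have key2 : ∫ x in DD n, ∫ t in Ioc (0:ℝ) 1, char k x * f (x + t • ic v) = 0 := by
    rw [← key]
    refine setIntegral_congr_fun DD_measurable fun x _ => ?_
    rw [intervalIntegral.integral_of_le zero_le_one, integral_const_mul]
  have hswap := MeasureTheory.integral_integral_swap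
    (μ := volume.restrict (DD n)) (ν := volume.restrict (Ioc (0:ℝ) 1))
    (f := fun x t => char k x * f (x + t • ic v)) hIprod
  have key3 : ∫ t in Ioc (0:ℝ) 1, ∫ x in DD n, char k x * f (x + t • ic v) = 0 := by
    rw [← hswap]
    exact key2
  have hinner : ∀ t : ℝ,
      (∫ x in DD n, char k x * f (x + t • ic v)) = ∫ x in DD n, char k x * f x := by
    intro t
    have hFt_inv : ∀ (γ : LL n) (y : Fin n → ℝ),
        (fun y => char k (y + (-t) • ic v) * f y) (γ +ᵥ y)
          = (fun y => char k (y + (-t) • ic v) * f y) y := by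
      intro γ y
      obtain ⟨m, hm⟩ := mem_LL.1 γ.2
      simp only [vadd_eq, hm]
      have e1 : ic m + y + (-t) • ic v = (y + (-t) • ic v) + ic m := by abel
      rw [e1, char_add, char_int, mul_one]
      have e2 : ic m + y = y + ic m := add_comm _ _
      rw [e2]
      congr 1
      exact hper y m
    have t1 := setIntegral_translate (F := fun y => char k (y + (-t) • ic v) * f y)
      hFt_inv (t • ic v)
    calc (∫ x in DD n, char k x * f (x + t • ic v))
        = ∫ x in DD n, char k ((t • ic v + x) + (-t) • ic v) * f (t • ic v + x) := by
          refine setIntegral_congr_fun DD_measurable fun x _ => ?_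
          rw [show (t • ic v + x) + (-t) • ic v = x by rw [neg_smul]; abel,
            add_comm (t • ic v) x]
      _ = ∫ x in DD n, char k (x + (-t) • ic v) * f x := t1
      _ = ∫ x in DD n, char k x * f x := by
          refine setIntegral_congr_fun DD_measurable fun x _ => ?_
          rw [char_add, char_smul k v hkv, mul_one]
  simp_rw [hinner] at key3
  rwa [setIntegral_const, Real.volume_real_Ioc, sub_zero, max_eq_left zero_le_one,
    one_smul] at key3

end FProps


section Torus

abbrev TT (n : ℕ) := Fin n → AddCircle (1 : ℝ)

noncomputable def Phi : (Fin n → ℝ) → TT n := fun x i => (x i : AddCircle (1 : ℝ))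

lemma Phi_continuous : Continuous (Phi (n := n)) :=
  continuous_pi fun i => (AddCircle.continuous_mk' 1).comp (continuous_apply i)

noncomputable def tchar (k : Fin n → ℤ) : C(TT n, ℂ) :=
  ⟨fun y => ∏ i, fourier (k i) (y i),
    continuous_finset_prod _ fun i _ => (fourier (k i)).continuous.comp (continuous_apply i)⟩

lemma tchar_apply (k : Fin n → ℤ) (y : TT n) : tchar k y = ∏ i, fourier (k i) (y i) := rfl

lemma tchar_phi (k : Fin n → ℤ) (x : Fin n → ℝ) : tchar k (Phi x) = char k x := by
  have hstep : ∀ i : Fin n, (fourier (k i) ((x i : ℝ) : AddCircle (1:ℝ)) : ℂ)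
      = Complex.exp (((2 * π * ((k i : ℝ) * x i) : ℝ) : ℂ) * Complex.I) := by
    intro i
    rw [fourier_coe_apply]
    congr 1
    push_cast
    ring
  rw [tchar_apply, char]
  rw [show (∏ i, (fourier (k i) (Phi x i) : ℂ))
      = ∏ i, Complex.exp (((2 * π * ((k i : ℝ) * x i) : ℝ) : ℂ) * Complex.I) from
    Finset.prod_congr rfl fun i _ => hstep i]
  rw [← Complex.exp_sum]
  congr 1
  push_cast
  rw [← Finset.sum_mul, Finset.mul_sum]

lemma tchar_mul (k l : Fin n → ℤ) : tchar k * tchar l = tchar (k + l) := by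
  ext y
  simp only [ContinuousMap.mul_apply, tchar_apply, ← Finset.prod_mul_distrib]
  refine Finset.prod_congr rfl fun i _ => ?_
  rw [Pi.add_apply]
  exact fourier_add.symm

lemma tchar_zero : tchar (0 : Fin n → ℤ) = 1 := by
  ext y
  simp [tchar_apply, fourier_zero]

lemma tchar_star (k : Fin n → ℤ) : star (tchar k) = tchar (-k) := by
  ext y
  rw [ContinuousMap.star_apply, tchar_apply, tchar_apply]
  rw [show (star (∏ i, (fourier (k i) (y i) : ℂ)))
      = (starRingEnd ℂ) (∏ i, (fourier (k i) (y i) : ℂ)) from rfl]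
  rw [map_prod]
  refine Finset.prod_congr rfl fun i _ => ?_
  rw [Pi.neg_apply]
  exact fourier_neg.symm

noncomputable def tAlg (n : ℕ) : StarSubalgebra ℂ C(TT n, ℂ) where
  toSubalgebra := Algebra.adjoin ℂ (Set.range (tchar (n := n)))
  star_mem' := by
    show Algebra.adjoin ℂ (Set.range (tchar (n := n))) ≤
      star (Algebra.adjoin ℂ (Set.range (tchar (n := n))))
    refine Algebra.adjoin_le ?_
    rintro - ⟨k, rfl⟩
    exact Algebra.subset_adjoin ⟨-k, (tchar_star k).symm⟩

lemma tAlg_coe (n : ℕ) :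
    Subalgebra.toSubmodule (tAlg n).toSubalgebra = span ℂ (Set.range (tchar (n := n))) := by
  apply Algebra.adjoin_eq_span_of_subset
  refine Subset.trans ?_ Submodule.subset_span
  intro x hx
  refine Submonoid.closure_induction (fun _ => id) ⟨0, tchar_zero⟩ ?_ hx
  rintro - - - - ⟨m, rfl⟩ ⟨l, rfl⟩
  exact ⟨m + l, (tchar_mul m l).symm⟩

lemma tAlg_sep (n : ℕ) : (tAlg n).SeparatesPoints := by
  intro y y' hyy
  obtain ⟨i, hi⟩ := Function.ne_iff.1 hyy
  refine ⟨_, ⟨tchar (Pi.single i 1), Algebra.subset_adjoin ⟨Pi.single i 1, rfl⟩, rfl⟩, ?_⟩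
  have hv : ∀ z : TT n, tchar (Pi.single i 1) z = fourier 1 (z i) := by
    intro z
    rw [tchar_apply]
    rw [Finset.prod_eq_single i (fun b _ hb => by
        rw [show (Pi.single i 1 : Fin n → ℤ) b = 0 from Pi.single_eq_of_ne hb 1, fourier_zero])
      (fun hb => absurd (Finset.mem_univ i) hb)]
    rw [Pi.single_eq_same]
  dsimp only
  rw [hv, hv]
  simp only [fourier_one]
  intro hc
  apply hi
  apply AddCircle.injective_toCircle one_ne_zero
  exact Subtype.coe_injective hc

lemma tAlg_top (n : ℕ) : (tAlg n).topologicalClosure = ⊤ :=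
  ContinuousMap.starSubalgebra_topologicalClosure_eq_top_of_separatesPoints (tAlg n) (tAlg_sep n)

lemma span_tchar_top (n : ℕ) :
    (span ℂ (Set.range (tchar (n := n)))).topologicalClosure = ⊤ := by
  rw [← tAlg_coe]
  exact congr_arg (Subalgebra.toSubmodule <| StarSubalgebra.toSubalgebra ·) (tAlg_top n)

lemma integral_mul_cont_zero {f : (Fin n → ℝ) → ℂ}
    (hfD : IntegrableOn f (DD n) volume)
    (hcoef : ∀ k : Fin n → ℤ, ∫ x in DD n, char k x * f x = 0) :
    ∀ G : C(TT n, ℂ), ∫ x in DD n, G (Phi x) * f x = 0 := by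
  have hint : ∀ G : C(TT n, ℂ), Integrable (fun x => G (Phi x) * f x) (volume.restrict (DD n)) := by
    intro G
    exact Integrable.bdd_mul (c := ‖G‖) hfD ((G.continuous.comp Phi_continuous).aestronglyMeasurable)
      (Filter.Eventually.of_forall fun x => G.norm_coe_le_norm (Phi x))
  set T0 : C(TT n, ℂ) →ₗ[ℂ] ℂ :=
    { toFun := fun G => ∫ x in DD n, G (Phi x) * f x
      map_add' := fun G H => by
        simp only [ContinuousMap.add_apply]
        rw [← integral_add (hint G) (hint H)]
        refine integral_congr_ae (Filter.Eventually.of_forall fun x => ?_)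
        ring
      map_smul' := fun c G => by
        simp only [ContinuousMap.smul_apply, smul_eq_mul, RingHom.id_apply]
        rw [← integral_const_mul]
        refine integral_congr_ae (Filter.Eventually.of_forall fun x => ?_)
        ring } with hT0
  have hbound : ∀ G : C(TT n, ℂ), ‖T0 G‖ ≤ (∫ x in DD n, ‖f x‖) * ‖G‖ := by
    intro G
    have h1 : ‖T0 G‖ ≤ ∫ x in DD n, ‖G (Phi x) * f x‖ := norm_integral_le_integral_norm _
    refine h1.trans ?_
    have h2 : (∫ x in DD n, ‖G (Phi x) * f x‖) ≤ ∫ x in DD n, ‖G‖ * ‖f x‖ := by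
      refine integral_mono_ae ((hint G).norm) (hfD.norm.const_mul ‖G‖)
        (Filter.Eventually.of_forall fun x => ?_)
      show ‖G (Phi x) * f x‖ ≤ ‖G‖ * ‖f x‖
      rw [norm_mul]
      exact mul_le_mul_of_nonneg_right (G.norm_coe_le_norm (Phi x)) (norm_nonneg _)
    refine h2.trans (le_of_eq ?_)
    rw [integral_const_mul, mul_comm]
  set T : C(TT n, ℂ) →L[ℂ] ℂ := T0.mkContinuous _ hbound with hT
  have hker : span ℂ (Set.range (tchar (n := n))) ≤ LinearMap.ker (T : C(TT n, ℂ) →ₗ[ℂ] ℂ) := by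
    rw [Submodule.span_le]
    rintro - ⟨k, rfl⟩
    rw [SetLike.mem_coe, LinearMap.mem_ker]
    show (∫ x in DD n, tchar k (Phi x) * f x) = 0
    calc (∫ x in DD n, tchar k (Phi x) * f x) = ∫ x in DD n, char k x * f x := by
          simp_rw [tchar_phi]
      _ = 0 := hcoef k
  have hclosed : IsClosed ((LinearMap.ker (T : C(TT n, ℂ) →ₗ[ℂ] ℂ) : Submodule ℂ C(TT n, ℂ)) : Set C(TT n, ℂ)) := by
    have he : ((LinearMap.ker (T : C(TT n, ℂ) →ₗ[ℂ] ℂ) : Submodule ℂ C(TT n, ℂ)) : Set C(TT n, ℂ)) = T ⁻¹' {0} := by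
      ext g
      simp [LinearMap.mem_ker]
    rw [he]
    exact isClosed_singleton.preimage T.continuous
  have htop : (⊤ : Submodule ℂ C(TT n, ℂ)) ≤ LinearMap.ker (T : C(TT n, ℂ) →ₗ[ℂ] ℂ) := by
    rw [← span_tchar_top n]
    exact Submodule.topologicalClosure_minimal _ hker hclosed
  intro G
  have hG := htop (Submodule.mem_top (x := G))
  rw [LinearMap.mem_ker] at hG
  exact hG

end Torus


section Lift

lemma ic_add (a b : Fin n → ℤ) : ic (a + b) = ic a + ic b := by
  funext i
  simp [ic]

noncomputable def rep (y : TT n) : Fin n → ℝ :=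
  fun i => ((AddCircle.equivIco 1 0 (y i) : Set.Ico (0:ℝ) (0+1)) : ℝ)

lemma rep_spec (y : TT n) : Phi (rep y) = y := by
  funext i
  show ((rep y i : ℝ) : AddCircle (1:ℝ)) = y i
  exact (AddCircle.equivIco 1 0).symm_apply_apply (y i)

lemma phi_eq_iff {a b : Fin n → ℝ} (hab : Phi a = Phi b) : ∃ m : Fin n → ℤ, b = a + ic m := by
  have hco : ∀ i, ∃ m : ℤ, b i = a i + m := by
    intro i
    have h2 : ((a i : ℝ) : AddCircle (1:ℝ)) = ((b i : ℝ) : AddCircle (1:ℝ)) := congrFun hab i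
    rw [QuotientAddGroup.eq] at h2
    obtain ⟨m, hm⟩ := AddSubgroup.mem_zmultiples_iff.1 h2
    refine ⟨m, ?_⟩
    have : (m : ℝ) = -a i + b i := by rw [← hm]; simp
    linarith [this]
  choose m hm using hco
  exact ⟨m, funext fun i => hm i⟩

end Lift

end XrayAux

open XrayAux Set Function Submodule

/-- Injectivity of the X-ray transform on `L¹(𝕋ⁿ)`, `n ≥ 2`: if for every nonzero
`v ∈ ℤⁿ` the function `x ↦ ∫₀¹ f(x+tv) dt` vanishes a.e., then `f = 0` a.e. -/
theorem xray_injective_L1 (n : ℕ) (hn : 2 ≤ n) (f : (Fin n → ℝ) → ℂ)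
    (hper : ∀ (x : Fin n → ℝ) (m : Fin n → ℤ), f (x + fun i => (m i : ℝ)) = f x)
    (hf : IntegrableOn f (Set.Icc (0 : Fin n → ℝ) 1))
    (h : ∀ v : Fin n → ℤ, v ≠ 0 →
      (fun x : Fin n → ℝ => ∫ t in (0:ℝ)..1, f (x + t • fun i => (v i : ℝ)))
        =ᵐ[volume] 0) :
    f =ᵐ[volume] 0 := by
  classical
  have hloc : LocallyIntegrable f volume := XrayAux.locallyIntegrable hper hf
  have hcoef : ∀ k : Fin n → ℤ, ∫ x in DD n, char k x * f x = 0 := fun k =>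
    coeff_zero hn hper hf h k
  have hcont := integral_mul_cont_zero (integrableOn_DD hf) hcoef
  have main := ae_eq_zero_of_integral_contDiff_smul_eq_zero hloc ?_
  · exact main
  intro g gsmooth gsupp
  obtain ⟨R, hR0, hRsub⟩ : ∃ R : ℝ, 0 ≤ R ∧ tsupport g ⊆ Metric.closedBall 0 R := by
    obtain ⟨R, hR⟩ := gsupp.isBounded.subset_closedBall 0
    exact ⟨max R 0, le_max_right _ _,
      hR.trans (Metric.closedBall_subset_closedBall (le_max_left _ _))⟩
  have hvanish : ∀ (x : Fin n → ℝ) (M : ℤ), R + ‖x‖ < M → ∀ m : Fin n → ℤ,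
      m ∉ Finset.Icc (fun _ => -M) (fun _ => M) → g (x + ic m) = 0 := by
    intro x M hM m hm
    by_contra hg
    have hmem : x + ic m ∈ tsupport g := subset_tsupport g hg
    have hn1 : ‖x + ic m‖ ≤ R := by
      have h5 := hRsub hmem
      rwa [Metric.mem_closedBall, dist_zero_right] at h5
    have hic : ‖ic m‖ ≤ R + ‖x‖ := by
      have h6 : ic m = (x + ic m) - x := by abel
      rw [h6]
      exact (norm_sub_le _ _).trans (by gcongr)
    have habs : ∀ i, |m i| < M := by
      intro i
      have h3 := norm_le_pi_norm (ic m) i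
      have h7 : |(m i : ℝ)| ≤ R + ‖x‖ := by
        rw [show |(m i : ℝ)| = ‖ic m i‖ from (Real.norm_eq_abs _).symm]
        exact h3.trans hic
      have h8 : |(m i : ℝ)| < (M : ℝ) := lt_of_le_of_lt h7 hM
      rw [← Int.cast_abs] at h8
      exact_mod_cast h8
    apply hm
    refine Finset.mem_Icc.2 ⟨fun i => ?_, fun i => ?_⟩
    · exact (abs_lt.1 (habs i)).1.le
    · exact (abs_lt.1 (habs i)).2.le
  set P : (Fin n → ℝ) → ℝ := fun x => ∑' m : Fin n → ℤ, g (x + ic m) with hP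
  have hPsum : ∀ (x : Fin n → ℝ) (M : ℤ), R + ‖x‖ < M →
      P x = ∑ m ∈ Finset.Icc (fun _ => -M) (fun _ => M), g (x + ic m) :=
    fun x M hM => tsum_eq_sum (fun m hm => hvanish x M hM m hm)
  have hPper : ∀ (x : Fin n → ℝ) (m0 : Fin n → ℤ), P (x + ic m0) = P x := by
    intro x m0
    calc P (x + ic m0) = ∑' m : Fin n → ℤ, g (x + ic (m0 + m)) := by
          refine tsum_congr fun m => ?_
          rw [ic_add, add_assoc]
      _ = P x := (Equiv.addLeft m0).tsum_eq fun m' => g (x + ic m')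
  have hPcont : Continuous P := by
    rw [continuous_iff_continuousAt]
    intro x0
    set M : ℤ := ⌈R + ‖x0‖⌉ + 2 with hM
    have hMgt : ∀ x ∈ Metric.ball x0 1, R + ‖x‖ < M := by
      intro x hx
      have h9 : ‖x - x0‖ < 1 := mem_ball_iff_norm.1 hx
      have h10 : ‖x‖ ≤ ‖x0‖ + ‖x - x0‖ := by
        calc ‖x‖ = ‖x0 + (x - x0)‖ := by rw [add_sub_cancel]
          _ ≤ ‖x0‖ + ‖x - x0‖ := norm_add_le _ _
      have h11 : R + ‖x0‖ ≤ (⌈R + ‖x0‖⌉ : ℝ) := Int.le_ceil _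
      have h12 : (M : ℝ) = (⌈R + ‖x0‖⌉ : ℝ) + 2 := by rw [hM]; push_cast; ring
      rw [h12]
      linarith
    have hfin : Continuous fun x : Fin n → ℝ =>
        ∑ m ∈ Finset.Icc (fun _ : Fin n => -M) (fun _ => M), g (x + ic m) :=
      continuous_finset_sum _ fun m _ =>
        gsmooth.continuous.comp (continuous_id.add continuous_const)
    refine hfin.continuousAt.congr ?_
    refine Filter.eventuallyEq_of_mem (Metric.ball_mem_nhds x0 one_pos) fun x hx => ?_
    exact (hPsum x M (hMgt x hx)).symm
  set M0 : ℤ := ⌈R⌉ + 2 with hM0def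
  have hM0 : ∀ x ∈ DD n, R + ‖x‖ < M0 := by
    intro x hx
    have h13 := norm_le_of_mem_DD hx
    have h14 : R ≤ (⌈R⌉ : ℝ) := Int.le_ceil _
    have h15 : (M0 : ℝ) = (⌈R⌉ : ℝ) + 2 := by rw [hM0def]; push_cast; ring
    rw [h15]
    linarith
  set F0 := Finset.Icc (fun _ : Fin n => -M0) (fun _ => M0) with hF0
  have hgf_int : Integrable (fun x => g x • f x) volume :=
    hloc.integrable_smul_left_of_hasCompactSupport gsmooth.continuous gsupp
  have hdecomp := (hDD n).integral_eq_tsum'' (fun x => g x • f x) hgf_int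
  have hterm : ∀ γ : LL n, (∫ x in DD n, g (γ +ᵥ x) • f (γ +ᵥ x))
      = ∫ x in DD n, g (x + (γ : Fin n → ℝ)) • f x := by
    intro γ
    refine setIntegral_congr_fun DD_measurable fun x _ => ?_
    rw [f_inv hper γ x, vadd_eq, add_comm]
  have hterm0 : ∀ m : Fin n → ℤ, m ∉ F0 → (∫ x in DD n, g (x + ic m) • f x) = 0 := by
    intro m hm
    rw [setIntegral_congr_fun DD_measurable (g := fun _ => (0:ℂ))
      (fun x hx => by rw [hvanish x M0 (hM0 x hx) m hm, zero_smul])]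
    simp
  obtain ⟨C, hC⟩ : ∃ C, ∀ y, ‖g y‖ ≤ C :=
    gsmooth.continuous.bounded_above_of_compact_support gsupp
  have hIm : ∀ m : Fin n → ℤ,
      Integrable (fun x => g (x + ic m) • f x) (volume.restrict (DD n)) := by
    intro m
    have hmul : Integrable (fun x => ((g (x + ic m) : ℝ) : ℂ) * f x) (volume.restrict (DD n)) := by
      refine Integrable.bdd_mul (c := C) (integrableOn_DD hf) ?_ (Filter.Eventually.of_forall fun x => ?_)
      · exact (Complex.continuous_ofReal.comp
          (gsmooth.continuous.comp (continuous_id.add continuous_const))).aestronglyMeasurable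
      · rw [Complex.norm_real]
        exact hC _
    refine hmul.congr (Filter.Eventually.of_forall fun x => ?_)
    exact (Complex.real_smul).symm
  have tsum_step : (∑' γ : LL n, ∫ x in DD n, g (x + (γ : Fin n → ℝ)) • f x)
      = ∑' m : Fin n → ℤ, ∫ x in DD n, g (x + ic m) • f x :=
    ((eL (n := n)).tsum_eq fun γ : LL n => ∫ x in DD n, g (x + (γ : Fin n → ℝ)) • f x).symm
  have hfinal : ∫ x, g x • f x = ∫ x in DD n, P x • f x := by
    rw [hdecomp]
    rw [tsum_congr hterm, tsum_step, tsum_eq_sum (fun m hm => hterm0 m hm),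
      ← integral_finset_sum F0 (fun m _ => hIm m)]
    refine setIntegral_congr_fun DD_measurable fun x hx => ?_
    rw [← Finset.sum_smul, ← hPsum x M0 (hM0 x hx)]
  have hPlift : ∀ a b : Fin n → ℝ, Phi a = Phi b → P a = P b := by
    intro a b hab
    obtain ⟨m, rfl⟩ := phi_eq_iff hab
    exact (hPper a m).symm
  have hcontPl : Continuous (fun y : TT n => ((P (rep y) : ℝ) : ℂ)) := by
    have hq : IsOpenQuotientMap (Phi (n := n)) :=
      IsOpenQuotientMap.piMap fun _ => QuotientAddGroup.isOpenQuotientMap_mk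
    rw [← hq.continuous_comp_iff]
    have he : (fun y : TT n => ((P (rep y) : ℝ) : ℂ)) ∘ Phi = fun x => ((P x : ℝ) : ℂ) := by
      funext x
      simp only [Function.comp_apply]
      rw [hPlift (rep (Phi x)) x (by rw [rep_spec])]
    rw [he]
    exact Complex.continuous_ofReal.comp hPcont
  set Pl : C(TT n, ℂ) := ⟨_, hcontPl⟩ with hPldef
  have hPl : ∀ x : Fin n → ℝ, Pl (Phi x) = ((P x : ℝ) : ℂ) := by
    intro x
    show ((P (rep (Phi x)) : ℝ) : ℂ) = _
    rw [hPlift (rep (Phi x)) x (by rw [rep_spec])]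
  have h0 := hcont Pl
  have hzero : ∫ x in DD n, P x • f x = 0 := by
    rw [← h0]
    refine setIntegral_congr_fun DD_measurable fun x _ => ?_
    rw [hPl, Complex.real_smul]
  rw [hfinal, hzero]
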